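/- Let $k$ be a local field, $q(x_1,\dots,x_n)$ a non-degenerate quadratic form over $k$, $p(t)\in k[t]$ nonzero, and $\alpha \in k$ a root of $p$ of even order $r$, with $p(t)=(t-\alpha)^r p_0(t)$, $p_0(\alpha)\neq 0$. If the quadratic form in $n+1$ variables $q(x_1,\dots,x_n) - p_0(\alpha) x_{n+1}^2$ is anisotropic over $k$, then the singular point $(0,\dots,0,\alpha)$ is NOT a limit of smooth $k$-points of the hypersurface $q(x)=p(t)$. -/

import Mathlib

open Polynomial

/-- Quantitative anisotropy bound: a continuous, 2-homogeneous anisotropic function on a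
proper normed space over a nontrivially normed field is bounded below by `C‖v‖²`. -/
lemma aniso_bound {k : Type*} [NontriviallyNormedField k]
    {E : Type*} [NormedAddCommGroup E] [NormedSpace k E] [ProperSpace E]
    (Q : E → k) (hcont : Continuous Q)
    (hhom : ∀ (d : k) (v : E), Q (d • v) = d ^ 2 * Q v)
    (haniso : ∀ v, Q v = 0 → v = 0) (v₀ : E) (hv₀ : v₀ ≠ 0) :
    ∃ C > 0, ∀ v : E, C * ‖v‖ ^ 2 ≤ ‖Q v‖ := by
  obtain ⟨c, hc⟩ := NormedField.exists_one_lt_norm k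
  have hcpos : (0 : ℝ) < ‖c‖ := lt_trans one_pos hc
  set S : Set E := {v | 1 / ‖c‖ ≤ ‖v‖} ∩ {v | ‖v‖ ≤ 1} with hSdef
  have hSclosed : IsClosed S :=
    (isClosed_le continuous_const continuous_norm).inter
      (isClosed_le continuous_norm continuous_const)
  have hSsub : S ⊆ Metric.closedBall 0 1 := by
    intro v hv
    simpa [Metric.mem_closedBall, dist_zero_right] using hv.2
  have hScompact : IsCompact S :=
    (isCompact_closedBall (0 : E) 1).of_isClosed_subset hSclosed hSsub
  have hSne : S.Nonempty := by
    obtain ⟨d, hd0, hlt, hge, -⟩ := rescale_to_shell hc one_pos hv₀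
    exact ⟨d • v₀, hge, hlt.le⟩
  obtain ⟨w, hwS, hwmin⟩ := hScompact.exists_isMinOn hSne (hcont.norm.continuousOn)
  have hw0 : w ≠ 0 := by
    intro h
    have : 1 / ‖c‖ ≤ (0 : ℝ) := by simpa [h] using hwS.1
    have : (0 : ℝ) < 1 / ‖c‖ := by positivity
    linarith
  have hm : 0 < ‖Q w‖ := by
    rw [norm_pos_iff]
    intro h
    exact hw0 (haniso w h)
  refine ⟨‖Q w‖, hm, ?_⟩
  intro v
  by_cases hv : v = 0
  · have hQ0 : Q 0 = 0 := by simpa using hhom 0 0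
    simp [hv, hQ0]
  · obtain ⟨d, hd0, hlt, hge, -⟩ := rescale_to_shell hc one_pos hv
    have hmem : d • v ∈ S := ⟨hge, hlt.le⟩
    have h1 : ‖Q w‖ ≤ ‖Q (d • v)‖ := hwmin hmem
    have h2 : ‖Q (d • v)‖ = ‖d‖ ^ 2 * ‖Q v‖ := by
      rw [hhom, norm_mul, norm_pow]
    have hdv : ‖d‖ * ‖v‖ ≤ 1 := by
      rw [← norm_smul]; exact hlt.le
    have hd : (0 : ℝ) ≤ ‖d‖ := norm_nonneg _
    have hvn : (0 : ℝ) ≤ ‖v‖ := norm_nonneg _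
    have hq : (0 : ℝ) ≤ ‖Q v‖ := norm_nonneg _
    nlinarith [mul_le_mul hdv hdv (by positivity) zero_le_one,
      mul_le_mul_of_nonneg_right h1 (mul_nonneg (mul_nonneg hvn hvn) (le_of_lt hm))]

/-- `k` a local field, `q` a non-degenerate quadratic form over `k`
(Gram matrix `M`), `p ∈ k[t]` nonzero, `α ∈ k` a root of `p` of even order `r`,
with `p = (t-α)^r p₀`, `p₀(α) ≠ 0`.  If the `(n+1)`-variable quadratic form
`q(x₁,…,xₙ) - p₀(α) x_{n+1}²` is anisotropic over `k`, then the singular point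
`(0,…,0,α)` is not a limit of smooth `k`-points of the hypersurface
`q(x) = p(t)`. -/
theorem stmt14 (k : Type*) [NontriviallyNormedField k] [CompleteSpace k]
    [LocallyCompactSpace k] [CharZero k]
    (n : ℕ) (hn : 1 ≤ n)
    (M : Matrix (Fin n) (Fin n) k) (hsymm : M.IsSymm) (hdet : M.det ≠ 0)
    (p p₀ : Polynomial k) (hp : p ≠ 0)
    (α : k) (r : ℕ) (hreven : Even r) (hrpos : 0 < r)
    (hfact : p = (Polynomial.X - Polynomial.C α) ^ r * p₀)
    (hp₀ : p₀.eval α ≠ 0)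
    (haniso : ∀ (x : Fin n → k) (s : k),
      dotProduct x (M.mulVec x) - p₀.eval α * s ^ 2 = 0 →
      x = 0 ∧ s = 0) :
    ((0, α) : (Fin n → k) × k) ∉
      closure {P : (Fin n → k) × k |
        dotProduct P.1 (M.mulVec P.1) = p.eval P.2 ∧
        ¬ (M.mulVec P.1 = 0 ∧ p.derivative.eval P.2 = 0)} := by
  have hproper : ProperSpace k := ProperSpace.of_locallyCompactSpace k
  set a := p₀.eval α with hadef
  -- the (n+1)-variable quadratic form
  set Q : (Fin n → k) × k → k :=
    fun P => dotProduct P.1 (M.mulVec P.1) - a * P.2 ^ 2 with hQdef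
  have hQcont : Continuous Q := by
    have : Q = fun P : (Fin n → k) × k =>
        (∑ i, P.1 i * ∑ j, M i j * P.1 j) - a * P.2 ^ 2 := by
      funext P
      simp [hQdef, dotProduct, Matrix.mulVec]
    rw [this]
    apply Continuous.sub
    · apply continuous_finset_sum
      intro i _
      exact ((continuous_apply i).comp continuous_fst).mul
        (continuous_finset_sum _ fun j _ =>
          continuous_const.mul ((continuous_apply j).comp continuous_fst))
    · exact continuous_const.mul (continuous_snd.pow 2)
  have hhom : ∀ (d : k) (v : (Fin n → k) × k), Q (d • v) = d ^ 2 * Q v := by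
    intro d v
    simp only [hQdef, Prod.smul_fst, Prod.smul_snd, smul_eq_mul,
      Matrix.mulVec_smul, dotProduct_smul, smul_dotProduct, smul_eq_mul]
    ring
  have haniso' : ∀ v : (Fin n → k) × k, Q v = 0 → v = 0 := by
    intro v h
    obtain ⟨h1, h2⟩ := haniso v.1 v.2 h
    exact Prod.ext_iff.mpr ⟨h1, h2⟩
  have hv₀ : ((0 : Fin n → k), (1 : k)) ≠ 0 := by
    simp [Prod.ext_iff]
  obtain ⟨C, hCpos, hC⟩ := aniso_bound Q hQcont hhom haniso' _ hv₀
  -- continuity of p₀ at α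
  have hcontp : ContinuousAt (fun t : k => p₀.eval t) α := p₀.continuous.continuousAt
  rw [Metric.continuousAt_iff] at hcontp
  obtain ⟨δ, hδpos, hδ⟩ := hcontp C hCpos
  -- p(α) = 0 and p'(α) = 0
  have hr2 : 2 ≤ r := by
    obtain ⟨m, hm⟩ := hreven; omega
  have hpα : p.eval α = 0 := by
    rw [hfact]
    simp [sub_self, zero_pow hrpos.ne']
  have hderiv : p.derivative.eval α = 0 := by
    rw [hfact]
    simp [Polynomial.derivative_mul, Polynomial.derivative_pow, sub_self,
      zero_pow (by omega : r - 1 ≠ 0), zero_pow hrpos.ne']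
  -- main argument
  intro hmem
  rw [Metric.mem_closure_iff] at hmem
  obtain ⟨P, hPset, hPdist⟩ := hmem δ hδpos
  obtain ⟨x, t⟩ := P
  obtain ⟨hqeq, hsm⟩ := hPset
  have hdt : dist t α < δ := by
    have h : dist α t ≤ dist ((0 : Fin n → k), α) (x, t) := by
      rw [Prod.dist_eq]; exact le_max_right _ _
    calc dist t α = dist α t := dist_comm _ _
      _ ≤ dist ((0 : Fin n → k), α) (x, t) := h
      _ < δ := hPdist
  obtain ⟨m, hm⟩ := hreven
  set s := (t - α) ^ m with hsdef
  have hs2 : s ^ 2 = (t - α) ^ r := by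
    rw [hsdef, ← pow_mul, hm, Nat.mul_comm, Nat.two_mul]
  have hpt : p.eval t = s ^ 2 * p₀.eval t := by
    rw [hfact, hs2]
    simp
  by_cases ht : t = α
  · subst ht
    have hq0 : dotProduct x (M.mulVec x) - a * (0 : k) ^ 2 = 0 := by
      rw [hqeq, hpα]; ring
    obtain ⟨hx0, -⟩ := haniso x 0 hq0
    subst hx0
    exact hsm ⟨Matrix.mulVec_zero M, hderiv⟩
  · have hsne : s ≠ 0 := pow_ne_zero _ (sub_ne_zero.mpr ht)
    have hQval : Q (x, s) = s ^ 2 * (p₀.eval t - a) := by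
      simp only [hQdef]
      rw [hqeq, hpt]
      ring
    have h1 : C * ‖(x, s)‖ ^ 2 ≤ ‖Q (x, s)‖ := hC _
    have h2 : ‖Q (x, s)‖ = ‖s‖ ^ 2 * ‖p₀.eval t - a‖ := by
      rw [hQval, norm_mul, norm_pow]
    have h3 : ‖p₀.eval t - a‖ < C := by
      have := hδ hdt
      rwa [dist_eq_norm] at this
    have h4 : ‖s‖ ≤ ‖(x, s)‖ := norm_snd_le ((x, s) : (Fin n → k) × k)
    have h5 : (0 : ℝ) < ‖s‖ := norm_pos_iff.mpr hsne
    have e1 : ‖s‖ ^ 2 ≤ ‖(x, s)‖ ^ 2 := pow_le_pow_left₀ h5.le h4 2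
    have e2 : C * ‖s‖ ^ 2 ≤ C * ‖(x, s)‖ ^ 2 :=
      mul_le_mul_of_nonneg_left e1 hCpos.le
    have e3 : ‖s‖ ^ 2 * ‖p₀.eval t - a‖ < ‖s‖ ^ 2 * C :=
      mul_lt_mul_of_pos_left h3 (by positivity)
    nlinarith [e2, e3, h1, h2]
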